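/- Soundness: if a Σ-fuzzy algebra A satisfies all the premises of a rule of the fuzzy sequent calculus, then it satisfies its conclusion; consequently, every model of a fuzzy theory Λ satisfies every sequent in the deductive closure Λ^⊢, and in particular if ⊢_Λ φ then A ⊨ φ for every model A of Λ. -/
import Mathlib


universe u

/-- A signature: operation symbols with positive arities, and constant symbols. -/
structure Signature : Type (u + 1) where
  Op : Type u
  ar : Op → ℕ+
  Const : Type u

/-- Terms of the language `(S, X)`: inductively built from variables, constants and
operation applications. -/
inductive Term (S : Signature.{u}) (X : Type u) : Type u
  | var : X → Term S X
  | const : S.Const → Term S X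
  | op (f : S.Op) : (Fin (S.ar f : ℕ) → Term S X) → Term S X

/-- Formulae: equations `s ≡ t` and membership propositions `∃_l t`. -/
inductive Formula (H : Type u) (S : Signature.{u}) (X : Type u) : Type u
  | eq : Term S X → Term S X → Formula H S X
  | mem : H → Term S X → Formula H S X

/-- A sequent `Γ ⊢ φ`. -/
abbrev Sequent (H : Type u) (S : Signature.{u}) (X : Type u) : Type u :=
  Set (Formula H S X) × Formula H S X

/-- A fuzzy theory: a set of sequents. -/
abbrev Theory (H : Type u) (S : Signature.{u}) (X : Type u) : Type u :=
  Set (Sequent H S X)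

/-- Substitution of terms for variables in a term. -/
def Term.subst {S : Signature.{u}} {X : Type u} (σ : X → Term S X) :
    Term S X → Term S X
  | .var x => σ x
  | .const c => .const c
  | .op f ts => .op f fun i => (ts i).subst σ

/-- Substitution of terms for variables in a formula. -/
def Formula.subst {H : Type u} {S : Signature.{u}} {X : Type u} (σ : X → Term S X) :
    Formula H S X → Formula H S X
  | .eq s t => .eq (s.subst σ) (t.subst σ)
  | .mem l t => .mem l (t.subst σ)

/-- The fuzzy sequent calculus: `Deriv Λ Γ φ` means that the sequent `Γ ⊢ φ` belongs
to the deductive closure `Λ^⊢` of the theory `Λ`. -/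
inductive Deriv {H : Type u} [Order.Frame H] {S : Signature.{u}} {X : Type u}
    (Λ : Theory H S X) : Set (Formula H S X) → Formula H S X → Prop
  | ax {Γ φ} : (Γ, φ) ∈ Λ → Deriv Λ Γ φ
  | assum {Γ φ} : φ ∈ Γ → Deriv Λ Γ φ
  | weak {Γ Δ φ} : Deriv Λ Γ φ → Deriv Λ (Γ ∪ Δ) φ
  | cut {Γ Φ ψ} : (∀ φ ∈ Φ, Deriv Λ Γ φ) → Deriv Λ Φ ψ → Deriv Λ Γ ψ
  | refl {Γ t} : Deriv Λ Γ (.eq t t)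
  | symm {Γ s t} : Deriv Λ Γ (.eq s t) → Deriv Λ Γ (.eq t s)
  | trans {Γ s t u} : Deriv Λ Γ (.eq s t) → Deriv Λ Γ (.eq t u) → Deriv Λ Γ (.eq s u)
  | sub {Γ φ} (σ : X → Term S X) :
      Deriv Λ Γ φ → Deriv Λ (Formula.subst σ '' Γ) (φ.subst σ)
  | cong {Γ} (f : S.Op) (ts ss : Fin (S.ar f : ℕ) → Term S X) :
      (∀ i, Deriv Λ Γ (.eq (ts i) (ss i))) → Deriv Λ Γ (.eq (.op f ts) (.op f ss))
  | inf {Γ t} : Deriv Λ Γ (.mem ⊥ t)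
  | mon {Γ l t} (l' : H) : Deriv Λ Γ (.mem l t) → Deriv Λ Γ (.mem (l ⊓ l') t)
  | exp {Γ} (f : S.Op) (ts : Fin (S.ar f : ℕ) → Term S X) (ls : Fin (S.ar f : ℕ) → H) :
      (∀ i, Deriv Λ Γ (.mem (ls i) (ts i))) →
      Deriv Λ Γ (.mem (⨅ i, ls i) (.op f ts))
  | sup {Γ t} (L : Set H) :
      (∀ l ∈ L, Deriv Λ Γ (.mem l t)) → Deriv Λ Γ (.mem (sSup L) t)
  | fn {Γ l t s} : Deriv Λ Γ (.eq t s) → Deriv Λ Γ (.mem l t) → Deriv Λ Γ (.mem l s)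

/-- The deductive closure `Λ^⊢` of a theory `Λ`. -/
def deductiveClosure {H : Type u} [Order.Frame H] {S : Signature.{u}} {X : Type u}
    (Λ : Theory H S X) : Theory H S X :=
  { p | Deriv Λ p.1 p.2 }
/-- A Σ-fuzzy algebra: a fuzzy set with operations (compatible with membership
degrees) and constants. -/
structure FuzzyAlgebra (H : Type u) [Order.Frame H] (S : Signature.{u}) :
    Type (u + 1) where
  carrier : Type u
  μ : carrier → H
  ops (f : S.Op) : (Fin (S.ar f : ℕ) → carrier) → carrier
  le_ops : ∀ (f : S.Op) (as : Fin (S.ar f : ℕ) → carrier),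
    (⨅ i, μ (as i)) ≤ μ (ops f as)
  consts : S.Const → carrier

/-- Evaluation of a term in a Σ-fuzzy algebra under an assignment of the variables. -/
def FuzzyAlgebra.eval {H : Type u} [Order.Frame H] {S : Signature.{u}} {X : Type u}
    (A : FuzzyAlgebra H S) (ι : X → A.carrier) : Term S X → A.carrier
  | .var x => ι x
  | .const c => A.consts c
  | .op f ts => A.ops f fun i => A.eval ι (ts i)

/-- Satisfaction of a formula in a Σ-fuzzy algebra under an assignment. -/
def FuzzyAlgebra.Sat {H : Type u} [Order.Frame H] {S : Signature.{u}} {X : Type u}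
    (A : FuzzyAlgebra H S) (ι : X → A.carrier) : Formula H S X → Prop
  | .eq s t => A.eval ι s = A.eval ι t
  | .mem l t => l ≤ A.μ (A.eval ι t)

/-- Satisfaction of a sequent `Γ ⊢ φ` (with respect to all assignments). -/
def FuzzyAlgebra.SatSeq {H : Type u} [Order.Frame H] {S : Signature.{u}} {X : Type u}
    (A : FuzzyAlgebra H S) (Γ : Set (Formula H S X)) (φ : Formula H S X) : Prop :=
  ∀ ι : X → A.carrier, (∀ ψ ∈ Γ, A.Sat ι ψ) → A.Sat ι φ

/-- A model of a fuzzy theory: an algebra satisfying all its sequents. -/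
def FuzzyAlgebra.IsModel {H : Type u} [Order.Frame H] {S : Signature.{u}} {X : Type u}
    (A : FuzzyAlgebra H S) (Λ : Theory H S X) : Prop :=
  ∀ p ∈ Λ, A.SatSeq p.1 p.2

/-- A morphism of Σ-fuzzy algebras: a fuzzy-set morphism commuting with all
operations and constants. -/
structure FuzzyAlgHom {H : Type u} [Order.Frame H] {S : Signature.{u}}
    (A B : FuzzyAlgebra H S) : Type u where
  toFun : A.carrier → B.carrier
  le_mem : ∀ x, A.μ x ≤ B.μ (toFun x)
  map_ops : ∀ (f : S.Op) (as : Fin (S.ar f : ℕ) → A.carrier),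
    toFun (A.ops f as) = B.ops f fun i => toFun (as i)
  map_consts : ∀ c, toFun (A.consts c) = B.consts c

lemma eval_subst {H : Type u} [Order.Frame H] {S : Signature.{u}} {X : Type u}
    (A : FuzzyAlgebra H S) (ι : X → A.carrier) (σ : X → Term S X) :
    ∀ t : Term S X, A.eval ι (t.subst σ) = A.eval (fun x => A.eval ι (σ x)) t
  | .var x => rfl
  | .const c => rfl
  | .op f ts => by
      simp only [Term.subst, FuzzyAlgebra.eval]
      exact congrArg _ (funext fun i => eval_subst A ι σ (ts i))

lemma sat_subst {H : Type u} [Order.Frame H] {S : Signature.{u}} {X : Type u}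
    (A : FuzzyAlgebra H S) (ι : X → A.carrier) (σ : X → Term S X)
    (φ : Formula H S X) :
    A.Sat ι (φ.subst σ) ↔ A.Sat (fun x => A.eval ι (σ x)) φ := by
  cases φ <;> simp [Formula.subst, FuzzyAlgebra.Sat, eval_subst]

/-- Soundness: every model of a fuzzy theory `Λ` satisfies every sequent in the
deductive closure `Λ^⊢`; in particular if `⊢_Λ φ` then `A ⊨ φ` for every model `A`. -/
theorem soundness {H : Type u} [Order.Frame H] {S : Signature.{u}} {X : Type u}
    (Λ : Theory H S X) (A : FuzzyAlgebra H S) (hA : A.IsModel Λ) :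
    (∀ (Γ : Set (Formula H S X)) (φ : Formula H S X),
        Deriv Λ Γ φ → A.SatSeq Γ φ) ∧
    (∀ φ : Formula H S X, Deriv Λ ∅ φ → ∀ ι : X → A.carrier, A.Sat ι φ) := by
  have main : ∀ (Γ : Set (Formula H S X)) (φ : Formula H S X),
      Deriv Λ Γ φ → A.SatSeq Γ φ := by
    intro Γ φ h
    induction h with
    | ax h => exact hA _ h
    | assum h => exact fun ι hΓ => hΓ _ h
    | weak _ ih => exact fun ι hΓ => ih ι fun ψ hψ => hΓ ψ (Or.inl hψ)
    | cut _ _ ih1 ih2 => exact fun ι hΓ => ih2 ι fun ψ hψ => ih1 ψ hψ ι hΓ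
    | refl => exact fun ι _ => rfl
    | symm _ ih => exact fun ι hΓ => (ih ι hΓ).symm
    | trans _ _ ih1 ih2 => exact fun ι hΓ => (ih1 ι hΓ).trans (ih2 ι hΓ)
    | sub σ _ ih =>
        intro ι hΓ
        rw [sat_subst]
        exact ih _ fun ψ hψ => (sat_subst A ι σ ψ).mp (hΓ _ ⟨ψ, hψ, rfl⟩)
    | cong f ts ss _ ih =>
        intro ι hΓ
        show A.ops f _ = A.ops f _
        exact congrArg _ (funext fun i => ih i ι hΓ)
    | inf => exact fun ι _ => bot_le
    | mon l' _ ih => exact fun ι hΓ => le_trans inf_le_left (ih ι hΓ)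
    | exp f ts ls _ ih =>
        intro ι hΓ
        exact le_trans (iInf_mono fun i => ih i ι hΓ) (A.le_ops f _)
    | sup L _ ih => exact fun ι hΓ => sSup_le fun l hl => ih l hl ι hΓ
    | fn _ _ ih1 ih2 =>
        intro ι hΓ
        show _ ≤ A.μ (A.eval ι _)
        rw [← ih1 ι hΓ]
        exact ih2 ι hΓ
  exact ⟨main, fun φ h ι => main ∅ φ h ι (fun ψ hψ => hψ.elim)⟩
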